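/- Let s, p : [0,∞) → ℝ be differentiable and satisfy s' = −k1(e0 − (s0 − s − p))s + k−1(s0 − s − p) and p' = k2(s0 − s − p), with s(0) = s0 and p(0) = 0, where k1, k−1, k2, e0, s0 > 0 and K_M = (k−1+k2)/k1. Assume 0 ≤ s(t) ≤ s0 for all t ≥ 0. Then, with E(t) = s0 − s(t) − p(t) and η = e0/K_M, one has E(t)² ≤ s0²·η²·(1 − exp(−k1·K_M·t)) for all t ≥ 0; in particular |E(t)| ≤ s0·η for all t ≥ 0. -/

import Mathlib

/-- energy bound on the deviation from the critical manifold s + p = s0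
of the standard QSSA. -/
theorem sQSSA_energy_bound (k1 km1 k2 e0 s0 KM η : ℝ)
    (hk1 : 0 < k1) (hkm1 : 0 < km1) (hk2 : 0 < k2) (he0 : 0 < e0) (hs0 : 0 < s0)
    (hKM : KM = (km1 + k2) / k1) (hη : η = e0 / KM)
    (s p : ℝ → ℝ)
    (hs : ∀ t : ℝ, 0 ≤ t →
      HasDerivAt s (-k1 * (e0 - (s0 - s t - p t)) * s t + km1 * (s0 - s t - p t)) t)
    (hp : ∀ t : ℝ, 0 ≤ t → HasDerivAt p (k2 * (s0 - s t - p t)) t)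
    (hs0' : s 0 = s0) (hp0 : p 0 = 0)
    (hbound : ∀ t : ℝ, 0 ≤ t → 0 ≤ s t ∧ s t ≤ s0) :
    ∀ t : ℝ, 0 ≤ t →
      (s0 - s t - p t) ^ 2 ≤ s0 ^ 2 * η ^ 2 * (1 - Real.exp (-(k1 * KM * t))) ∧
      |s0 - s t - p t| ≤ s0 * η := by
  have hKMpos : 0 < KM := by rw [hKM]; positivity
  have hηpos : 0 < η := by rw [hη]; positivity
  have hlam : k1 * KM = km1 + k2 := by
    rw [hKM]; field_simp
  have he0' : KM * η = e0 := by
    rw [hη]; field_simp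
  set lam : ℝ := k1 * KM with hlamdef
  set M : ℝ := s0 ^ 2 * η ^ 2 with hMdef
  set E : ℝ → ℝ := fun t => s0 - s t - p t with hEdef
  set F : ℝ → ℝ := fun t => Real.exp (lam * t) * (E t) ^ 2 - M * (Real.exp (lam * t) - 1)
    with hFdef
  have hF0 : F 0 = 0 := by simp [hFdef, hEdef, hs0', hp0]
  -- derivative of F
  have hFd : ∀ t : ℝ, 0 ≤ t → HasDerivAt F
      (Real.exp (lam * t) *
        (lam * (E t) ^ 2 + 2 * E t * (k1 * (e0 - E t) * s t - lam * E t) - M * lam)) t := by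
    intro t ht
    have hexp : HasDerivAt (fun u => Real.exp (lam * u)) (Real.exp (lam * t) * lam) t := by
      simpa using ((hasDerivAt_id t).const_mul lam).exp
    have hE' : HasDerivAt E (k1 * (e0 - E t) * s t - lam * E t) t := by
      have h := ((hasDerivAt_const t s0).fun_sub (hs t ht)).fun_sub (hp t ht)
      refine h.congr_deriv ?_
      simp only [hEdef]
      rw [hlam]; ring
    have hE2 : HasDerivAt (fun u => (E u) ^ 2)
        (2 * E t * (k1 * (e0 - E t) * s t - lam * E t)) t := by
      have := hE'.fun_pow 2
      simpa [mul_comm, mul_assoc, mul_left_comm] using this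
    have h := (hexp.fun_mul hE2).fun_sub ((hexp.fun_sub (hasDerivAt_const t 1)).const_mul M)
    refine h.congr_deriv ?_
    ring
  -- key pointwise inequality
  have key : ∀ t : ℝ, 0 ≤ t →
      lam * (E t) ^ 2 + 2 * E t * (k1 * (e0 - E t) * s t - lam * E t) - M * lam ≤ 0 := by
    intro t ht
    obtain ⟨hs1, hs2⟩ := hbound t ht
    have hQ : 2 * s t * E t * (KM * η - E t) - KM * (E t) ^ 2 - KM * (s0 ^ 2 * η ^ 2) ≤ 0 := by
      rcases le_or_gt 0 (E t) with hE | hE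
      · nlinarith [mul_nonneg hKMpos.le (sq_nonneg (s0 * η - E t)),
          mul_nonneg (mul_nonneg (mul_nonneg hKMpos.le hηpos.le)
            (sub_nonneg.2 hs2)) hE,
          mul_nonneg hs1 (sq_nonneg (E t))]
      · nlinarith [mul_nonneg hs1 (sq_nonneg (E t)),
          mul_nonneg (mul_nonneg hs1 (neg_nonneg.2 hE.le)) (mul_pos hKMpos hηpos).le,
          mul_nonneg hKMpos.le (sq_nonneg (E t)),
          mul_pos hKMpos (mul_pos (mul_pos hs0 hs0) (mul_pos hηpos hηpos))]
    have : lam * (E t) ^ 2 + 2 * E t * (k1 * (e0 - E t) * s t - lam * E t) - M * lam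
        = k1 * (2 * s t * E t * (KM * η - E t) - KM * (E t) ^ 2 - KM * (s0 ^ 2 * η ^ 2)) := by
      rw [hMdef, hlamdef, ← he0']; ring
    rw [this]
    exact mul_nonpos_of_nonneg_of_nonpos hk1.le hQ
  -- F is antitone on [0, ∞)
  have hanti : AntitoneOn F (Set.Ici (0 : ℝ)) := by
    apply antitoneOn_of_deriv_nonpos (convex_Ici 0)
    · exact fun t ht => ((hFd t ht).continuousAt).continuousWithinAt
    · rw [interior_Ici]
      exact fun x hx => ((hFd x (le_of_lt hx)).differentiableAt).differentiableWithinAt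
    · rw [interior_Ici]
      intro x hx
      rw [(hFd x (le_of_lt hx)).deriv]
      exact mul_nonpos_of_nonneg_of_nonpos (Real.exp_pos _).le (key x (le_of_lt hx))
  intro t ht
  have hFt : F t ≤ 0 := by
    have := hanti (Set.self_mem_Ici) (Set.mem_Ici.2 ht) ht
    rwa [hF0] at this
  have hexppos : (0:ℝ) < Real.exp (lam * t) := Real.exp_pos _
  have hmain : (E t) ^ 2 ≤ M * (1 - Real.exp (-(lam * t))) := by
    rw [Real.exp_neg]
    have h1 : Real.exp (lam * t) * (E t) ^ 2 ≤ M * (Real.exp (lam * t) - 1) := by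
      simp only [hFdef] at hFt; linarith
    rw [show M * (1 - (Real.exp (lam * t))⁻¹) = M * (Real.exp (lam * t) - 1) / Real.exp (lam * t)
        from by field_simp, le_div_iff₀ hexppos]
    nlinarith
  refine ⟨hmain, ?_⟩
  have hsq : (E t) ^ 2 ≤ (s0 * η) ^ 2 := by
    have := (Real.exp_pos (-(lam * t))).le
    nlinarith
  have habs : |E t| ≤ s0 * η := by
    nlinarith [abs_nonneg (E t), sq_abs (E t), mul_pos hs0 hηpos]
  exact habs
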